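/- With the setup of an Arnoldi decomposition AV_m = V_m H_m + h_{m+1,m} v_{m+1} e_m^T with ‖v_{m+1}‖ = 1, v = β V_m e_1, and τ > 0, the error E_m(τ) = e^{−τA}v − β V_m e^{−τH_m} e_1 satisfies ‖E_m(τ)‖ ≤ τ β h_{m+1,m} · max_{0≤t≤τ} |e_m^T e^{−tH_m} e_1| · (e^{τμ₂} − 1)/(τμ₂), where μ₂ = μ₂[−A] = λ_max(−(A+A*)/2). -/

import Mathlib

open Matrix NormedSpace Set Filter

attribute [local instance] Matrix.linftyOpNormedRing Matrix.linftyOpNormedAlgebra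

/-- Euclidean (2-) norm of a complex vector. -/
noncomputable def enorm2 {n : ℕ} (x : Fin n → ℂ) : ℝ :=
  Real.sqrt (∑ i, ‖x i‖ ^ 2)

namespace ArnoldiAux

lemma enorm2_eq_norm {n : ℕ} (x : Fin n → ℂ) :
    enorm2 x = ‖(WithLp.toLp 2 x : EuclideanSpace ℂ (Fin n))‖ := by
  rw [enorm2, EuclideanSpace.norm_eq]

noncomputable def Lv {n N : ℕ} (v : Fin n → ℂ) (W : Matrix (Fin N) (Fin n) ℂ) :
    Matrix (Fin n) (Fin n) ℂ →L[ℝ] EuclideanSpace ℂ (Fin N) :=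
  LinearMap.toContinuousLinearMap
  { toFun := fun M => WithLp.toLp 2 (W.mulVec (M.mulVec v))
    map_add' := fun M M' => by ext i; simp [add_mulVec, mulVec_add, Pi.add_apply]
    map_smul' := fun c M => by ext i; simp [smul_mulVec, mulVec_smul] }

lemma Lv_apply {n N : ℕ} (v : Fin n → ℂ) (W : Matrix (Fin N) (Fin n) ℂ)
    (M : Matrix (Fin n) (Fin n) ℂ) :
    (Lv v W M : Fin N → ℂ) = W.mulVec (M.mulVec v) := rfl

noncomputable def entryCLM {n : ℕ} (u : Fin n → ℂ) (i : Fin n) :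
    Matrix (Fin n) (Fin n) ℂ →L[ℝ] ℂ :=
  LinearMap.toContinuousLinearMap
  { toFun := fun M => M.mulVec u i
    map_add' := fun M M' => by simp [add_mulVec, Pi.add_apply]
    map_smul' := fun c M => by simp [smul_mulVec] }

lemma entryCLM_apply {n : ℕ} (u : Fin n → ℂ) (i : Fin n) (M : Matrix (Fin n) (Fin n) ℂ) :
    entryCLM u i M = M.mulVec u i := rfl

lemma hasDerivAt_expFlow {n : ℕ} (B : Matrix (Fin n) (Fin n) ℂ) (t : ℝ) :
    HasDerivAt (fun u : ℝ => exp (-(u:ℂ) • B)) ((-B) * exp (-(t:ℂ) • B)) t := by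
  have h1 : HasDerivAt (fun u : ℝ => exp (u • (-B))) ((-B) * exp (t • (-B))) t :=
    hasDerivAt_exp_smul_const' (-B) t
  have key : ∀ u : ℝ, exp (u • (-B)) = exp (-(u:ℂ) • B) := by
    intro u
    congr 1
    rw [neg_smul, ← smul_neg, ← algebraMap_smul ℂ u (-B)]
    norm_num
  rw [funext key, key t] at h1
  exact h1

lemma slope_cond {f : ℝ → ℝ} {f' : ℝ → ℝ} {x : ℝ} (hf : HasDerivAt f (f' x) x) :
    ∀ r, f' x < r → ∃ᶠ z in nhdsWithin x (Ioi x), (z - x)⁻¹ * (f z - f x) < r := by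
  intro r hr
  have h1 : Tendsto (slope f x) (nhdsWithin x {x}ᶜ) (nhds (f' x)) :=
    hasDerivAt_iff_tendsto_slope.1 hf
  have h2 : Tendsto (slope f x) (nhdsWithin x (Ioi x)) (nhds (f' x)) :=
    h1.mono_left (nhdsWithin_mono x fun z hz => ne_of_gt hz)
  have h3 : ∀ᶠ z in nhdsWithin x (Ioi x), slope f x z < r :=
    h2.eventually_lt_const hr
  refine h3.mono (fun z hz => ?_) |>.frequently
  simpa [slope_def_field, div_eq_inv_mul] using hz

lemma rayleigh {N : ℕ} {S : Matrix (Fin N) (Fin N) ℂ} (hS : S.IsHermitian) (y : Fin N → ℂ) :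
    (star y ⬝ᵥ S.mulVec y).re ≤ (⨆ i, hS.eigenvalues i) * (star y ⬝ᵥ y).re := by
  set U : Matrix (Fin N) (Fin N) ℂ := (hS.eigenvectorUnitary : Matrix (Fin N) (Fin N) ℂ) with hU
  set z : Fin N → ℂ := (star U).mulVec y with hz
  have hUmem : U ∈ Matrix.unitaryGroup (Fin N) ℂ := hS.eigenvectorUnitary.2
  have hUU : U * star U = 1 := (Matrix.mem_unitaryGroup_iff).mp hUmem
  have hstarz : star z = star y ᵥ* U := by
    rw [hz, Matrix.star_mulVec, Matrix.star_eq_conjTranspose,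
      Matrix.conjTranspose_conjTranspose]
  have key1 : star y ⬝ᵥ S.mulVec y
      = star z ⬝ᵥ (Matrix.diagonal (RCLike.ofReal ∘ hS.eigenvalues)).mulVec z := by
    conv_lhs => rw [hS.spectral_theorem, Unitary.conjStarAlgAut_apply]
    rw [hstarz, ← Matrix.dotProduct_mulVec, hz, ← Matrix.mulVec_mulVec, ← Matrix.mulVec_mulVec]
  have key2 : star z ⬝ᵥ z = star y ⬝ᵥ y := by
    rw [hstarz, ← Matrix.dotProduct_mulVec, hz, Matrix.mulVec_mulVec, hUU, Matrix.one_mulVec]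
  have hdiag : ∀ i, (Matrix.diagonal (RCLike.ofReal ∘ hS.eigenvalues)).mulVec z i
      = (hS.eigenvalues i : ℂ) * z i := by
    intro i; simp [Matrix.mulVec_diagonal]
  rw [key1, ← key2]
  have hre : (star z ⬝ᵥ (Matrix.diagonal (RCLike.ofReal ∘ hS.eigenvalues)).mulVec z).re
      = ∑ i, hS.eigenvalues i * Complex.normSq (z i) := by
    rw [dotProduct, Complex.re_sum]
    refine Finset.sum_congr rfl fun i _ => ?_
    simp only [Pi.star_apply, Complex.star_def, hdiag i]
    rw [show (starRingEnd ℂ) (z i) * ((hS.eigenvalues i : ℂ) * z i)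
        = (hS.eigenvalues i : ℂ) * (z i * (starRingEnd ℂ) (z i)) by ring, Complex.mul_conj]
    simp
  have hre2 : (star z ⬝ᵥ z).re = ∑ i, Complex.normSq (z i) := by
    rw [dotProduct, Complex.re_sum]
    refine Finset.sum_congr rfl fun i _ => ?_
    simp only [Pi.star_apply, Complex.star_def]
    rw [show (starRingEnd ℂ) (z i) * z i = z i * (starRingEnd ℂ) (z i) by ring,
      Complex.mul_conj]
    simp
  rw [hre, hre2, Finset.mul_sum]
  refine Finset.sum_le_sum fun i _ => ?_
  exact mul_le_mul_of_nonneg_right (le_ciSup (Finite.bddAbove_range _) i) (Complex.normSq_nonneg _)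

lemma re_quad_eq {N : ℕ} (A : Matrix (Fin N) (Fin N) ℂ) (x : Fin N → ℂ) :
    (star x ⬝ᵥ (-(((1:ℂ)/2) • (A + Aᴴ))).mulVec x).re = (star x ⬝ᵥ (-A).mulVec x).re := by
  have hconj : star x ⬝ᵥ Aᴴ.mulVec x = star (star x ⬝ᵥ A.mulVec x) := by
    rw [Matrix.dotProduct_mulVec (star x) Aᴴ x, ← Matrix.star_mulVec,
      Matrix.star_dotProduct]
  rw [Matrix.neg_mulVec, Matrix.neg_mulVec, Matrix.smul_mulVec, Matrix.add_mulVec,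
    dotProduct_neg, dotProduct_neg, dotProduct_smul, dotProduct_add, hconj]
  simp [Complex.add_re, Complex.smul_re]
  ring

end ArnoldiAux

set_option maxHeartbeats 1000000 in
open ArnoldiAux in
theorem arnoldi_exp_error_bound {N k : ℕ}
    (A : Matrix (Fin N) (Fin N) ℂ)
    (V : Matrix (Fin N) (Fin (k + 1)) ℂ)
    (H : Matrix (Fin (k + 1)) (Fin (k + 1)) ℂ)
    (h : ℝ) (hh : 0 ≤ h) (vnext : Fin N → ℂ)
    (horth : Vᴴ * V = 1)
    (hvnext_unit : star vnext ⬝ᵥ vnext = 1)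
    (hvnext_orth : Vᴴ.mulVec vnext = 0)
    (hHess : ∀ i j : Fin (k + 1), (j : ℕ) + 1 < (i : ℕ) → H i j = 0)
    (hArnoldi : A * V = V * H + (h : ℂ) • Matrix.vecMulVec vnext (Pi.single (Fin.last k) 1))
    (β : ℝ) (hβ : 0 ≤ β) (v : Fin N → ℂ)
    (hv : v = (β : ℂ) • V.mulVec (Pi.single 0 1))
    (τ : ℝ) (hτ : 0 < τ)
    (hHerm : (-(((1 : ℂ) / 2) • (A + Aᴴ))).IsHermitian) :
    enorm2 ((NormedSpace.exp (-(τ : ℂ) • A)).mulVec v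
        - (β : ℂ) • V.mulVec ((NormedSpace.exp (-(τ : ℂ) • H)).mulVec (Pi.single 0 1)))
      ≤ τ * β * h *
          (⨆ t : Set.Icc (0 : ℝ) τ,
            ‖((NormedSpace.exp (-((t : ℝ) : ℂ) • H)).mulVec (Pi.single 0 1)) (Fin.last k)‖) *
          (if (⨆ i, hHerm.eigenvalues i) = 0 then 1
           else (Real.exp (τ * ⨆ i, hHerm.eigenvalues i) - 1) / (τ * ⨆ i, hHerm.eigenvalues i)) := by
  classical
  set μ : ℝ := ⨆ i, hHerm.eigenvalues i with hμdef
  set e1 : Fin (k + 1) → ℂ := Pi.single 0 1 with he1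
  set M : ℝ := ⨆ t : Set.Icc (0 : ℝ) τ,
      ‖((exp (-((t : ℝ) : ℂ) • H)).mulVec e1) (Fin.last k)‖ with hMdef
  set ε : ℝ := β * h * M with hεdef
  -- the error trajectory
  set yp : ℝ → (Fin N → ℂ) := fun s =>
    (exp (-(s:ℂ) • A)).mulVec v - (β:ℂ) • V.mulVec ((exp (-(s:ℂ) • H)).mulVec e1)
    with hypdef
  set y : ℝ → EuclideanSpace ℂ (Fin N) :=
    fun s => Lv v 1 (exp (-(s:ℂ) • A)) - Lv ((β:ℂ) • e1) V (exp (-(s:ℂ) • H)) with hydef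
  -- the scalar forcing coefficient
  set c : ℝ → ℂ := fun s => (β:ℂ) * h * ((exp (-(s:ℂ) • H)).mulVec e1 (Fin.last k)) with hcdef
  have hy_eq : ∀ s : ℝ, y s = WithLp.toLp 2 (yp s) := by
    intro s
    show WithLp.toLp 2 ((1 : Matrix (Fin N) (Fin N) ℂ).mulVec ((exp (-(s:ℂ) • A)).mulVec v))
      - WithLp.toLp 2 (V.mulVec ((exp (-(s:ℂ) • H)).mulVec ((β:ℂ) • e1))) = WithLp.toLp 2 (yp s)
    rw [← WithLp.toLp_sub, Matrix.one_mulVec, Matrix.mulVec_smul, Matrix.mulVec_smul, hypdef]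
  have hvmv : ∀ w : Fin (k+1) → ℂ,
      (Matrix.vecMulVec vnext (Pi.single (Fin.last k) (1:ℂ))).mulVec w
        = w (Fin.last k) • vnext := by
    intro w; funext i
    simp [Matrix.vecMulVec_apply, Matrix.mulVec, dotProduct, Pi.single_apply, mul_comm]
  have hAVw : ∀ w : Fin (k+1) → ℂ,
      A.mulVec (V.mulVec w) = V.mulVec (H.mulVec w) + ((h:ℂ) * w (Fin.last k)) • vnext := by
    intro w
    rw [Matrix.mulVec_mulVec, hArnoldi, Matrix.add_mulVec, Matrix.smul_mulVec, hvmv,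
      ← Matrix.mulVec_mulVec, smul_smul]
  have hODE : ∀ s : ℝ, (Lv v 1 ((-A) * exp (-(s:ℂ) • A))
        - Lv ((β:ℂ) • e1) V ((-H) * exp (-(s:ℂ) • H)) : EuclideanSpace ℂ (Fin N))
      = WithLp.toLp 2 (-(A.mulVec (yp s)) - c s • vnext) := by
    intro s
    have hw : (exp (-(s:ℂ) • A)).mulVec v
        = yp s + (β:ℂ) • V.mulVec ((exp (-(s:ℂ) • H)).mulVec e1) := by
      rw [hypdef]; simp
    have goal' : Lv v (1 : Matrix (Fin N) (Fin N) ℂ) ((-A) * exp (-(s:ℂ) • A))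
        - Lv ((β:ℂ) • e1) V ((-H) * exp (-(s:ℂ) • H))
        = WithLp.toLp 2 (-(A.mulVec (yp s)) - c s • vnext) := by
      simp only [Lv, LinearMap.coe_toContinuousLinearMap', LinearMap.coe_mk, AddHom.coe_mk, ← WithLp.toLp_sub, Matrix.one_mulVec, ← Matrix.mulVec_mulVec, Matrix.neg_mulVec,
        Matrix.mulVec_neg, Matrix.mulVec_smul, hw, Matrix.mulVec_add, hAVw, hcdef]
      congr 1
      module
    exact goal'
  have hy' : ∀ s, HasDerivAt y (WithLp.toLp 2 (-(A.mulVec (yp s)) - c s • vnext) :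
      EuclideanSpace ℂ (Fin N)) s := by
    intro s
    have h1 := (Lv v (1 : Matrix (Fin N) (Fin N) ℂ)).hasFDerivAt.comp_hasDerivAt s (hasDerivAt_expFlow A s)
    have h2 := (Lv ((β:ℂ) • e1) V).hasFDerivAt.comp_hasDerivAt s (hasDerivAt_expFlow H s)
    have h3 := h1.sub h2
    rw [← hODE s]
    exact h3
  -- E-typed copies
  set vn : EuclideanSpace ℂ (Fin N) := WithLp.toLp 2 vnext with hvndef
  set zA : ℝ → EuclideanSpace ℂ (Fin N) := fun s => WithLp.toLp 2 (-(A.mulVec (yp s))) with hzAdef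
  set zc : ℝ → EuclideanSpace ℂ (Fin N) := fun s => c s • vn with hzcdef
  set z : ℝ → EuclideanSpace ℂ (Fin N) := fun s => zA s - zc s with hzdef
  have hyz : ∀ s : ℝ, HasDerivAt y (z s) s := by
    intro s
    exact hy' s
  -- continuity and sup bounds
  have hexpH_cont : Continuous fun s : ℝ => exp (-(s:ℂ) • H) :=
    continuous_iff_continuousAt.2 fun s => (hasDerivAt_expFlow H s).continuousAt
  have hg_cont : Continuous fun s : ℝ => ‖(exp (-(s:ℂ) • H)).mulVec e1 (Fin.last k)‖ := by
    have h2 := (entryCLM e1 (Fin.last k)).continuous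
    exact (h2.comp hexpH_cont).norm
  have hMb : BddAbove (Set.range fun t : Set.Icc (0:ℝ) τ =>
      ‖(exp (-((t:ℝ):ℂ) • H)).mulVec e1 (Fin.last k)‖) := by
    have himg := ((isCompact_Icc (a := (0:ℝ)) (b := τ)).image hg_cont).bddAbove
    rwa [Set.image_eq_range] at himg
  have hgM : ∀ s ∈ Set.Icc (0:ℝ) τ, ‖(exp (-(s:ℂ) • H)).mulVec e1 (Fin.last k)‖ ≤ M := by
    intro s hs
    rw [hMdef]
    exact le_ciSup hMb ⟨s, hs⟩
  have hM0 : 0 ≤ M := le_trans (norm_nonneg _) (hgM 0 ⟨le_refl 0, hτ.le⟩)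
  have hβh : 0 ≤ β * h := mul_nonneg hβ hh
  have hε0 : 0 ≤ ε := mul_nonneg hβh hM0
  have hc_le : ∀ s ∈ Set.Icc (0:ℝ) τ, ‖c s‖ ≤ ε := by
    intro s hs
    have h1 : ‖c s‖ = β * h * ‖(exp (-(s:ℂ) • H)).mulVec e1 (Fin.last k)‖ := by
      rw [hcdef]
      simp only [norm_mul, Complex.norm_real, Real.norm_eq_abs]
      rw [abs_of_nonneg hβ, abs_of_nonneg hh]
    rw [h1, hεdef]
    exact mul_le_mul_of_nonneg_left (hgM s hs) hβh
  -- Rayleigh quotient bound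
  have hquad : ∀ x : EuclideanSpace ℂ (Fin N),
      (inner ℂ x (WithLp.toLp 2 (-(A.mulVec x)) : EuclideanSpace ℂ (Fin N)) : ℂ).re ≤ μ * ‖x‖ ^ 2 := by
    intro x
    have h1 : (inner ℂ x (WithLp.toLp 2 (-(A.mulVec x)) : EuclideanSpace ℂ (Fin N)) : ℂ)
        = star (x : Fin N → ℂ) ⬝ᵥ ((-A).mulVec (x : Fin N → ℂ)) := by
      rw [Matrix.neg_mulVec]
      rw [EuclideanSpace.inner_eq_star_dotProduct, dotProduct_comm, WithLp.ofLp_toLp]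
    have h2 : ((star (x : Fin N → ℂ)) ⬝ᵥ (x : Fin N → ℂ)).re = ‖x‖ ^ 2 := by
      have h3 := inner_self_eq_norm_sq (𝕜 := ℂ) x
      rw [RCLike.re_to_complex, EuclideanSpace.inner_eq_star_dotProduct, dotProduct_comm] at h3
      exact h3
    calc (inner ℂ x (WithLp.toLp 2 (-(A.mulVec x)) : EuclideanSpace ℂ (Fin N)) : ℂ).re
        = (star (x : Fin N → ℂ) ⬝ᵥ ((-(((1:ℂ)/2) • (A + Aᴴ))).mulVec (x : Fin N → ℂ))).re := by
          rw [h1, re_quad_eq]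
      _ ≤ μ * ((star (x : Fin N → ℂ)) ⬝ᵥ (x : Fin N → ℂ)).re := rayleigh hHerm _
      _ = μ * ‖x‖ ^ 2 := by rw [h2]
  -- vn has unit norm
  have hvn1 : ‖vn‖ = 1 := by
    have h1 := inner_self_eq_norm_sq (𝕜 := ℂ) vn
    have h2 : (inner ℂ vn vn : ℂ) = star vnext ⬝ᵥ vnext := by
      rw [EuclideanSpace.inner_eq_star_dotProduct, dotProduct_comm]
    rw [RCLike.re_to_complex, h2, hvnext_unit] at h1
    simp only [Complex.one_re] at h1
    rw [← Real.sqrt_sq (norm_nonneg vn), ← h1, Real.sqrt_one]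
  -- squared norm and its derivative
  set φ : ℝ → ℝ := fun s => (inner ℂ (y s) (y s) : ℂ).re with hφdef
  have hφ_eq : ∀ s, φ s = ‖y s‖ ^ 2 := by
    intro s
    have h1 := inner_self_eq_norm_sq (𝕜 := ℂ) (y s)
    rw [RCLike.re_to_complex] at h1
    exact h1
  have hφ' : ∀ s, HasDerivAt φ (2 * (inner ℂ (y s) (z s) : ℂ).re) s := by
    intro s
    have h1 := (hyz s).inner ℂ (hyz s)
    have h2 := (Complex.reCLM.hasFDerivAt).comp_hasDerivAt s h1
    refine h2.congr_deriv ?_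
    rw [← inner_conj_symm (y s) (z s)]
    simp only [Complex.reCLM_apply, Complex.add_re, Complex.conj_re]
    ring
  -- the Gronwall estimate for each δ > 0
  have key : ∀ δ : ℝ, 0 < δ → ‖y τ‖ ≤ gronwallBound δ μ (ε + |μ| * δ) τ := by
    intro δ hδ
    set f : ℝ → ℝ := fun s => Real.sqrt (φ s + δ ^ 2) with hfdef
    have hφ0 : ∀ s, 0 ≤ φ s := fun s => by rw [hφ_eq]; positivity
    have hpos : ∀ s, 0 < φ s + δ ^ 2 := fun s => by nlinarith [hφ0 s]
    set f' : ℝ → ℝ := fun s =>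
      (2 * (inner ℂ (y s) (z s) : ℂ).re) / (2 * Real.sqrt (φ s + δ ^ 2)) with hf'def
    have hf' : ∀ s, HasDerivAt f (f' s) s := by
      intro s
      have h1 := (hφ' s).add_const (δ ^ 2)
      have h2 := (Real.hasDerivAt_sqrt (ne_of_gt (hpos s))).comp s h1
      refine h2.congr_deriv ?_
      rw [hf'def]
      field_simp
    have hf_cont : ContinuousOn f (Set.Icc 0 τ) :=
      Continuous.continuousOn (continuous_iff_continuousAt.2 fun s => (hf' s).continuousAt)
    have hsq : ∀ s, f s ^ 2 = ‖y s‖ ^ 2 + δ ^ 2 := by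
      intro s
      rw [hfdef]
      rw [Real.sq_sqrt (hpos s).le, hφ_eq]
    have hfy : ∀ s, ‖y s‖ ≤ f s := by
      intro s
      rw [hfdef]
      conv_lhs => rw [← Real.sqrt_sq (norm_nonneg (y s))]
      apply Real.sqrt_le_sqrt
      rw [hφ_eq]
      nlinarith
    have hfδ : ∀ s, δ ≤ f s := by
      intro s
      rw [hfdef]
      conv_lhs => rw [← Real.sqrt_sq hδ.le]
      apply Real.sqrt_le_sqrt
      nlinarith [hφ0 s]
    have hfpos : ∀ s, 0 < f s := fun s => lt_of_lt_of_le hδ (hfδ s)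
    have hbound : ∀ s ∈ Set.Ico (0:ℝ) τ, f' s ≤ μ * f s + (ε + |μ| * δ) := by
      intro s hs
      have hsIcc : s ∈ Set.Icc (0:ℝ) τ := ⟨hs.1, hs.2.le⟩
      have hsplit : (inner ℂ (y s) (z s) : ℂ)
          = (inner ℂ (y s) (zA s) : ℂ) - (inner ℂ (y s) (zc s) : ℂ) := by
        rw [hzdef]
        exact inner_sub_right _ _ _
      have hterm1 : (inner ℂ (y s) (zA s) : ℂ).re ≤ μ * ‖y s‖ ^ 2 := by
        rw [hzAdef]
        simp only
        rw [hy_eq s]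
        exact hquad _
      have hterm2 : |(inner ℂ (y s) (zc s) : ℂ).re| ≤ ε * ‖y s‖ := by
        have h0 : |(inner ℂ (y s) (zc s) : ℂ).re| ≤ ‖(inner ℂ (y s) (zc s) : ℂ)‖ := by
          exact Complex.abs_re_le_norm _
        have h1 : ‖(inner ℂ (y s) (zc s) : ℂ)‖ ≤ ‖y s‖ * ‖zc s‖ := norm_inner_le_norm _ _
        have h2 : ‖zc s‖ = ‖c s‖ := by
          rw [hzcdef]
          simp only
          rw [norm_smul, hvn1, mul_one]
        calc |(inner ℂ (y s) (zc s) : ℂ).re| ≤ ‖y s‖ * ‖zc s‖ := le_trans h0 h1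
          _ = ‖y s‖ * ‖c s‖ := by rw [h2]
          _ ≤ ‖y s‖ * ε := mul_le_mul_of_nonneg_left (hc_le s hsIcc) (norm_nonneg _)
          _ = ε * ‖y s‖ := mul_comm _ _
      have hnum : (inner ℂ (y s) (z s) : ℂ).re ≤ μ * ‖y s‖ ^ 2 + ε * ‖y s‖ := by
        rw [hsplit, Complex.sub_re]
        have := abs_le.1 hterm2
        linarith [hterm1]
      have hfs2 : f s ^ 2 = ‖y s‖ ^ 2 + δ ^ 2 := hsq s
      have hfsqrt : Real.sqrt (φ s + δ ^ 2) = f s := rfl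
      rw [hf'def]
      simp only
      rw [hfsqrt, div_le_iff₀ (mul_pos two_pos (hfpos s))]
      have hμf : μ * (f s ^ 2) = μ * ‖y s‖ ^ 2 + μ * δ ^ 2 := by rw [hfs2]; ring
      nlinarith [hnum, hfy s, hfδ s, hfpos s, norm_nonneg (y s), hε0,
        abs_nonneg μ, le_abs_self μ, neg_abs_le μ,
        mul_nonneg (mul_nonneg (abs_nonneg μ) hδ.le) (sub_nonneg.2 (hfδ s)),
        mul_nonneg hε0 (sub_nonneg.2 (hfy s))]
    have hy0 : y 0 = WithLp.toLp 2 (yp 0) := hy_eq 0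
    have hyp0 : yp 0 = 0 := by
      rw [hypdef]
      simp only [Complex.ofReal_zero, neg_zero, zero_smul, exp_zero, Matrix.one_mulVec]
      rw [hv]
      simp
    have hf0 : f 0 ≤ δ := by
      have hφz : φ 0 = 0 := by
        rw [hφ_eq 0, hy0, hyp0]
        simp
      rw [hfdef]
      simp only
      rw [hφz, zero_add, Real.sqrt_sq hδ.le]
    have hgr := le_gronwallBound_of_liminf_deriv_right_le (f' := f') hf_cont
      (fun x _ r hr => slope_cond (hf' x) r hr) hf0 hbound τ (Set.right_mem_Icc.2 hτ.le)
    rw [sub_zero] at hgr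
    exact le_trans (hfy τ) hgr
  -- pass to the limit δ → 0⁺
  have hcont : Continuous (fun δ : ℝ => gronwallBound δ μ (ε + |μ| * δ) τ) := by
    unfold gronwallBound
    by_cases hK : μ = 0
    · simp only [hK, if_true]
      fun_prop
    · simp only [hK, if_false]
      fun_prop
  have hlim : Filter.Tendsto (fun δ : ℝ => gronwallBound δ μ (ε + |μ| * δ) τ)
      (nhdsWithin 0 (Set.Ioi 0)) (nhds (gronwallBound 0 μ ε τ)) := by
    have h0 : gronwallBound 0 μ (ε + |μ| * 0) τ = gronwallBound 0 μ ε τ := by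
      norm_num
    have := hcont.tendsto 0
    rw [h0] at this
    exact tendsto_nhdsWithin_of_tendsto_nhds this
  have hfin : ‖y τ‖ ≤ gronwallBound 0 μ ε τ :=
    ge_of_tendsto hlim (eventually_nhdsWithin_of_forall fun δ hδ => key δ hδ)
  -- identify the two sides
  have hL : enorm2 ((exp (-(τ:ℂ) • A)).mulVec v
      - (β:ℂ) • V.mulVec ((exp (-(τ:ℂ) • H)).mulVec e1)) = ‖y τ‖ := by
    rw [enorm2_eq_norm]
    congr 1
    rw [hy_eq τ, hypdef]
  rw [hL]
  refine le_trans hfin (le_of_eq ?_)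
  by_cases hK : μ = 0
  · rw [hεdef, hK]
    simp [gronwallBound]
    ring
  · rw [gronwallBound_of_K_ne_0 hK]
    simp only [hK, if_false]
    rw [hεdef]
    field_simp
    ring
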